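/- Let F : ℝ → S_m (m×m real symmetric matrices) be a matrix polynomial in one real variable t, written in block form F(t) = [[Q(t), g(t)],[g(t)ᵀ, f(t)]] with Q(t) ∈ S_{m-1}, g(t) ∈ ℝ^{m-1}, f(t) ∈ ℝ. Suppose g and f vanish to second order at 0 (g(t) = t²β(t), f(t) = t²γ(t) for polynomials β, γ), Q(0) ≻ 0, and F(t) is not positive definite for all t in some interval (0, ε). Then γ(0) ≤ 0, i.e., f''(0) ≤ 0. -/

import Mathlib

open Matrix

lemma posDef_coercive {m : ℕ} {A : Matrix (Fin m) (Fin m) ℝ} (hA : A.PosDef) :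
    ∃ c > 0, ∀ y : Fin m → ℝ, c * ‖y‖ ^ 2 ≤ y ⬝ᵥ (A *ᵥ y) := by
  cases m with
  | zero =>
    refine ⟨1, one_pos, fun y => ?_⟩
    have h0 : ‖y‖ = 0 := by rw [Subsingleton.elim y 0, norm_zero]
    rw [h0]
    simp [dotProduct]
  | succ k =>
    have hcont : Continuous fun y : Fin (k+1) → ℝ => y ⬝ᵥ (A *ᵥ y) := by
      simp only [dotProduct, mulVec]
      fun_prop
    have hsph : IsCompact (Metric.sphere (0 : Fin (k+1) → ℝ) 1) := isCompact_sphere _ _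
    have hne : (Metric.sphere (0 : Fin (k+1) → ℝ) 1).Nonempty :=
      NormedSpace.sphere_nonempty.mpr zero_le_one
    obtain ⟨u, hu, hmin⟩ := hsph.exists_isMinOn hne hcont.continuousOn
    have hu1 : ‖u‖ = 1 := by simpa using hu
    have hu0 : u ≠ 0 := by intro h; rw [h] at hu1; simp at hu1
    have hc : 0 < u ⬝ᵥ (A *ᵥ u) := by
      have := hA.dotProduct_mulVec_pos hu0
      simpa using this
    refine ⟨u ⬝ᵥ (A *ᵥ u), hc, fun y => ?_⟩
    rcases eq_or_ne y 0 with rfl | hy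
    · simp [dotProduct]
    · have hny : 0 < ‖y‖ := norm_pos_iff.mpr hy
      have hmem : (‖y‖⁻¹ • y) ∈ Metric.sphere (0 : Fin (k+1) → ℝ) 1 := by
        simp [norm_smul, abs_of_pos (inv_pos.mpr hny), inv_mul_cancel₀ hny.ne']
      have h1 : u ⬝ᵥ (A *ᵥ u) ≤ (‖y‖⁻¹ • y) ⬝ᵥ (A *ᵥ (‖y‖⁻¹ • y)) := hmin hmem
      have hval : (‖y‖⁻¹ • y) ⬝ᵥ (A *ᵥ (‖y‖⁻¹ • y)) = ‖y‖⁻¹ ^ 2 * (y ⬝ᵥ (A *ᵥ y)) := by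
        rw [mulVec_smul, smul_dotProduct, dotProduct_smul]
        ring_nf
      rw [hval] at h1
      have h2 : u ⬝ᵥ (A *ᵥ u) * ‖y‖ ^ 2 ≤ ‖y‖⁻¹ ^ 2 * (y ⬝ᵥ A *ᵥ y) * ‖y‖ ^ 2 :=
        mul_le_mul_of_nonneg_right h1 (by positivity)
      calc u ⬝ᵥ (A *ᵥ u) * ‖y‖ ^ 2 ≤ ‖y‖⁻¹ ^ 2 * (y ⬝ᵥ A *ᵥ y) * ‖y‖ ^ 2 := h2
        _ = y ⬝ᵥ (A *ᵥ y) := by field_simp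

lemma final_arith (c γ0 B₁ T N s S qQ γt : ℝ)
    (hc : 0 < c) (hT : 0 < T)
    (h8 : T * (8 * B₁ ^ 2) < c * γ0)
    (hN : 0 < N)
    (hqQ : c * N ^ 2 - c / 4 * N ^ 2 ≤ qQ)
    (hcross : -(|s| * (B₁ * N)) ≤ s * S)
    (hγt : γ0 / 2 < γt) :
    0 < qQ + 2 * T * s * S + T * γt * s ^ 2 := by
  set a : ℝ := |s| with ha
  have ha0 : 0 ≤ a := abs_nonneg s
  have hs2 : s ^ 2 = a ^ 2 := (sq_abs s).symm
  have hA := mul_le_mul_of_nonneg_left hcross (le_of_lt (by linarith : (0:ℝ) < 2 * T))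
  rcases ha0.lt_or_eq with hapos | haz
  · have h6 : 0 < 6 * c * γ0 - 16 * T * B₁ ^ 2 := by nlinarith
    have hTa : (0:ℝ) < T * a ^ 2 := by positivity
    have hB := mul_lt_mul_of_pos_right hγt hTa
    have h : 0 < 3/4 * c * N ^ 2 - 2 * T * a * B₁ * N + γ0/2 * T * a ^ 2 := by
      nlinarith [sq_nonneg (3 * c * N - 4 * T * a * B₁),
        mul_pos (mul_pos hT (mul_pos hapos hapos)) h6]
    rw [hs2]
    nlinarith [hA, hB, h, hqQ]
  · have hs0 : s = 0 := abs_eq_zero.mp haz.symm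
    rw [hs0]
    nlinarith [sq_nonneg N, mul_pos hc (mul_pos hN hN)]

/-- Let `F(t) = [[Q(t), g(t)],[g(t)ᵀ, f(t)]]` be a symmetric matrix polynomial in a real
variable `t` with polynomial entries, where `g(t) = t² β(t)` and `f(t) = t² γ(t)` vanish
to second order at `0`.  If `Q(0) ≻ 0` and `F(t)` is not positive definite for all
`t ∈ (0, ε)`, then `γ(0) ≤ 0` (equivalently `f''(0) ≤ 0`). -/
theorem schur_complement_second_order {m : ℕ}
    (Qp : Matrix (Fin m) (Fin m) (Polynomial ℝ))
    (βp : Fin m → Polynomial ℝ) (γp : Polynomial ℝ)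
    (Q : ℝ → Matrix (Fin m) (Fin m) ℝ)
    (hQ : ∀ t, Q t = Matrix.of fun i j => (Qp i j).eval t)
    (hQ0 : (Q 0).PosDef)
    (F : ℝ → Matrix (Fin m ⊕ Unit) (Fin m ⊕ Unit) ℝ)
    (hF : ∀ t, F t = Matrix.fromBlocks (Q t)
        (Matrix.of fun i _ => t ^ 2 * (βp i).eval t)
        (Matrix.of fun _ j => t ^ 2 * (βp j).eval t)
        (Matrix.of fun _ _ => t ^ 2 * γp.eval t))
    (hFsym : ∀ t, (F t).IsSymm)
    (ε : ℝ) (hε : 0 < ε)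
    (hnpd : ∀ t ∈ Set.Ioo 0 ε, ¬ (F t).PosDef) :
    γp.eval 0 ≤ 0 := by
  by_contra hpos
  push_neg at hpos
  obtain ⟨c, hc, hcoer⟩ := posDef_coercive hQ0
  set B₁ : ℝ := (∑ i, |(βp i).eval 0|) + 1 with hB₁def
  have hB₁ : 0 < B₁ := by
    have : (0:ℝ) ≤ ∑ i, |(βp i).eval 0| := Finset.sum_nonneg fun i _ => abs_nonneg _
    linarith
  -- eventual bounds near t = 0
  have e1 : ∀ᶠ t in nhds (0:ℝ),
      (∑ i, ∑ j, |(Qp i j).eval t - (Qp i j).eval 0|) < c / 4 := by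
    have hcont : Continuous fun t : ℝ =>
        ∑ i, ∑ j, |(Qp i j).eval t - (Qp i j).eval 0| := by fun_prop
    have h0 : (∑ i, ∑ j, |(Qp i j).eval (0:ℝ) - (Qp i j).eval 0|) = 0 := by simp
    have htd := hcont.tendsto 0
    rw [h0] at htd
    exact htd.eventually_lt_const (by linarith)
  have e2 : ∀ᶠ t in nhds (0:ℝ), (∑ i, |(βp i).eval t|) < B₁ := by
    have hcont : Continuous fun t : ℝ => ∑ i, |(βp i).eval t| := by fun_prop
    exact (hcont.tendsto 0).eventually_lt_const (by simp [hB₁def])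
  have e3 : ∀ᶠ t in nhds (0:ℝ), γp.eval 0 / 2 < γp.eval t := by
    have hcont : Continuous fun t : ℝ => γp.eval t := by fun_prop
    exact (hcont.tendsto 0).eventually_const_lt (by linarith)
  have e4 : ∀ᶠ t in nhds (0:ℝ), t ^ 2 * (8 * B₁ ^ 2) < c * γp.eval 0 := by
    have hcont : Continuous fun t : ℝ => t ^ 2 * (8 * B₁ ^ 2) := by fun_prop
    have htd := hcont.tendsto 0
    have h0 : ((0:ℝ) ^ 2 * (8 * B₁ ^ 2)) = 0 := by norm_num
    rw [h0] at htd
    exact htd.eventually_lt_const (mul_pos hc hpos)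
  obtain ⟨η, hη, hP⟩ := Metric.eventually_nhds_iff.mp ((e1.and e2).and (e3.and e4))
  set t : ℝ := min (ε / 2) (η / 2) with htdef
  have ht0 : 0 < t := lt_min (by linarith) (by linarith)
  have htε : t < ε := lt_of_le_of_lt (min_le_left _ _) (by linarith)
  have htη : dist t 0 < η := by
    rw [Real.dist_eq, sub_zero, abs_of_pos ht0]
    exact lt_of_le_of_lt (min_le_right _ _) (by linarith)
  obtain ⟨⟨hδ, hB⟩, hγ, ht2⟩ := hP htη
  apply hnpd t ⟨ht0, htε⟩
  rw [posDef_iff_dotProduct_mulVec]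
  constructor
  · rw [Matrix.IsHermitian, conjTranspose_eq_transpose_of_trivial]
    exact hFsym t
  · intro x hx
    obtain ⟨y, s', rfl⟩ : ∃ y s', x = Sum.elim y s' :=
      ⟨x ∘ Sum.inl, x ∘ Sum.inr, (Sum.elim_comp_inl_inr x).symm⟩
    have key : star (Sum.elim y s') ⬝ᵥ (F t *ᵥ (Sum.elim y s')) =
        y ⬝ᵥ (Q t *ᵥ y) + 2 * t ^ 2 * s' () * (∑ i, (βp i).eval t * y i)
          + t ^ 2 * γp.eval t * (s' ()) ^ 2 := by
      have hstar : star (Sum.elim y s') = Sum.elim y s' := by funext i; simp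
      rw [hstar, hF, fromBlocks_mulVec, sumElim_dotProduct_sumElim, Sum.elim_comp_inl,
        Sum.elim_comp_inr, dotProduct_add, dotProduct_add]
      have h1 : y ⬝ᵥ ((Matrix.of fun i (_ : Unit) => t ^ 2 * (βp i).eval t) *ᵥ s')
          = t ^ 2 * s' () * (∑ i, (βp i).eval t * y i) := by
        simp only [mulVec, dotProduct, of_apply, Fintype.sum_unique]
        rw [Finset.mul_sum]
        refine Finset.sum_congr rfl fun i _ => ?_
        show y i * (t ^ 2 * (βp i).eval t * s' ()) = _
        ring
      have h2 : s' ⬝ᵥ ((Matrix.of fun (_ : Unit) j => t ^ 2 * (βp j).eval t) *ᵥ y)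
          = t ^ 2 * s' () * (∑ i, (βp i).eval t * y i) := by
        simp only [mulVec, dotProduct, of_apply, Fintype.sum_unique]
        show s' () * _ = _
        rw [Finset.mul_sum, Finset.mul_sum]
        refine Finset.sum_congr rfl fun i _ => by ring
      have h3 : s' ⬝ᵥ ((Matrix.of fun (_ : Unit) (_ : Unit) => t ^ 2 * γp.eval t) *ᵥ s')
          = t ^ 2 * γp.eval t * (s' ()) ^ 2 := by
        simp only [mulVec, dotProduct, of_apply, Fintype.sum_unique]
        show s' () * (t ^ 2 * γp.eval t * s' ()) = _
        ring
      rw [h1, h2, h3]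
      ring
    rw [key]
    have hyabs : ∀ i, |y i| ≤ ‖y‖ := fun i => by
      simpa [Real.norm_eq_abs] using norm_le_pi_norm y i
    have hynn : (0:ℝ) ≤ ‖y‖ := norm_nonneg _
    have hSb : |∑ i, (βp i).eval t * y i| ≤ B₁ * ‖y‖ := by
      calc |∑ i, (βp i).eval t * y i| ≤ ∑ i, |(βp i).eval t * y i| :=
            Finset.abs_sum_le_sum_abs _ _
        _ ≤ ∑ i, |(βp i).eval t| * ‖y‖ := by
            refine Finset.sum_le_sum fun i _ => ?_
            rw [abs_mul]
            exact mul_le_mul_of_nonneg_left (hyabs i) (abs_nonneg _)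
        _ = (∑ i, |(βp i).eval t|) * ‖y‖ := by rw [Finset.sum_mul]
        _ ≤ B₁ * ‖y‖ := mul_le_mul_of_nonneg_right hB.le hynn
    have hQb : y ⬝ᵥ (Q 0 *ᵥ y) - (c / 4) * ‖y‖ ^ 2 ≤ y ⬝ᵥ (Q t *ᵥ y) := by
      have hdiff : |y ⬝ᵥ (Q t *ᵥ y) - y ⬝ᵥ (Q 0 *ᵥ y)| ≤
          (∑ i, ∑ j, |(Qp i j).eval t - (Qp i j).eval 0|) * ‖y‖ ^ 2 := by
        rw [hQ t, hQ 0]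
        simp only [dotProduct, mulVec, of_apply]
        rw [← Finset.sum_sub_distrib]
        calc |∑ i, (y i * ∑ j, (Qp i j).eval t * y j - y i * ∑ j, (Qp i j).eval 0 * y j)|
            = |∑ i, ∑ j, y i * (((Qp i j).eval t - (Qp i j).eval 0) * y j)| := by
              congr 1
              refine Finset.sum_congr rfl fun i _ => ?_
              rw [← mul_sub, ← Finset.sum_sub_distrib, Finset.mul_sum]
              refine Finset.sum_congr rfl fun j _ => by ring
          _ ≤ ∑ i, ∑ j, |y i * (((Qp i j).eval t - (Qp i j).eval 0) * y j)| := by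
              refine (Finset.abs_sum_le_sum_abs _ _).trans ?_
              exact Finset.sum_le_sum fun i _ => Finset.abs_sum_le_sum_abs _ _
          _ ≤ ∑ i, ∑ j, |(Qp i j).eval t - (Qp i j).eval 0| * (‖y‖ * ‖y‖) := by
              refine Finset.sum_le_sum fun i _ => Finset.sum_le_sum fun j _ => ?_
              rw [abs_mul, abs_mul]
              calc |y i| * (|(Qp i j).eval t - (Qp i j).eval 0| * |y j|)
                  = |(Qp i j).eval t - (Qp i j).eval 0| * (|y i| * |y j|) := by ring
                _ ≤ |(Qp i j).eval t - (Qp i j).eval 0| * (‖y‖ * ‖y‖) := by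
                    refine mul_le_mul_of_nonneg_left ?_ (abs_nonneg _)
                    exact mul_le_mul (hyabs i) (hyabs j) (abs_nonneg _) hynn
          _ = (∑ i, ∑ j, |(Qp i j).eval t - (Qp i j).eval 0|) * ‖y‖ ^ 2 := by
              rw [Finset.sum_mul]
              refine Finset.sum_congr rfl fun i _ => ?_
              rw [Finset.sum_mul]
              exact Finset.sum_congr rfl fun j _ => by ring
      have h1 := (abs_le.mp hdiff).1
      have h2 : (∑ i, ∑ j, |(Qp i j).eval t - (Qp i j).eval 0|) * ‖y‖ ^ 2 ≤
          (c / 4) * ‖y‖ ^ 2 := mul_le_mul_of_nonneg_right hδ.le (by positivity)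
      linarith
    rcases eq_or_ne y 0 with hy0 | hy0
    · -- y = 0 forces s' () ≠ 0
      have hs0 : s' () ≠ 0 := by
        intro hs
        apply hx
        funext z
        rcases z with i | u
        · exact congrFun hy0 i
        · cases u; exact hs
      have hyQ : y ⬝ᵥ (Q t *ᵥ y) = 0 := by rw [hy0]; simp
      have hS0 : (∑ i, (βp i).eval t * y i) = 0 := by rw [hy0]; simp
      rw [hyQ, hS0]
      have hsq : 0 < (s' ()) ^ 2 := by positivity
      have hγt : 0 < γp.eval t := by linarith
      have : 0 < t ^ 2 * γp.eval t * (s' ()) ^ 2 := by positivity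
      linarith
    · have hN : 0 < ‖y‖ := norm_pos_iff.mpr hy0
      have hqQ : c * ‖y‖ ^ 2 - c / 4 * ‖y‖ ^ 2 ≤ y ⬝ᵥ (Q t *ᵥ y) := by
        have := hcoer y
        linarith
      have hcross : -(|s' ()| * (B₁ * ‖y‖)) ≤ s' () * (∑ i, (βp i).eval t * y i) := by
        have habs : |s' () * (∑ i, (βp i).eval t * y i)| ≤ |s' ()| * (B₁ * ‖y‖) := by
          rw [abs_mul]
          exact mul_le_mul_of_nonneg_left hSb (abs_nonneg _)
        linarith [(abs_le.mp habs).1]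
      have hT2 : (0:ℝ) < t ^ 2 := by positivity
      exact final_arith c (γp.eval 0) B₁ (t ^ 2) ‖y‖ (s' ()) _ _ _
        hc hT2 ht2 hN hqQ hcross hγ
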